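/- For all sufficiently large integers k, the unique root of Δ_k(z) in the open complex disk |z| < 1/√(8+8k) is a simple real root lying in the open real interval (0, 1/√(8+8k)). -/

import Mathlib

set_option maxHeartbeats 1600000


open Filter Polynomial

/-- `C_k = (2k-2)!/(k-1)!` as a complex number. -/
noncomputable def CcC (k : ℕ) : ℂ :=
  ((2 * k - 2).factorial : ℂ) / ((k - 1).factorial : ℂ)

/-- The polynomial `p_k(z) = 1 − 2z − (7+8k)z²` over `ℂ`. -/
noncomputable def Ppoly (k : ℕ) : Polynomial ℂ :=
  Polynomial.C 1 - Polynomial.C 2 * Polynomial.X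
    - Polynomial.C (7 + 8 * (k : ℂ)) * Polynomial.X ^ 2

/-- The polynomial `h_k(z) = 1 − z − C_k·z^{2k+1}` over `ℂ`. -/
noncomputable def Hpoly (k : ℕ) : Polynomial ℂ :=
  Polynomial.C 1 - Polynomial.X - Polynomial.C (CcC k) * Polynomial.X ^ (2 * k + 1)

/-- The polynomial `Δ_k(z) = p_k(z) + 4·C_k·z^{2k+1}·h_k(z)` over `ℂ`. -/
noncomputable def Dpoly (k : ℕ) : Polynomial ℂ :=
  Ppoly k + Polynomial.C (4 * CcC k) * Polynomial.X ^ (2 * k + 1) * Hpoly k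

noncomputable def CR (k : ℕ) : ℝ := ((2 * k - 2).factorial : ℝ) / ((k - 1).factorial : ℝ)

lemma CcC_eq (k : ℕ) : CcC k = ((CR k : ℝ) : ℂ) := by simp [CcC, CR]

lemma evalD (k : ℕ) (w : ℂ) : (Dpoly k).eval w =
    1 - 2*w - (7 + 8*(k:ℂ))*w^2 + 4*(CcC k)*w^(2*k+1)
      - 4*(CcC k)*w^(2*k+2) - 4*(CcC k)^2*w^(4*k+2) := by
  have h2 : 2*(2*k+1) = 4*k+2 := by omega
  simp [Dpoly, Ppoly, Hpoly]
  ring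

lemma evalD' (k : ℕ) (w : ℂ) : ((Dpoly k).derivative).eval w =
    -2 - (14 + 16*(k:ℂ))*w + 4*(CcC k)*(2*(k:ℂ)+1)*w^(2*k)
      - 4*(CcC k)*(2*(k:ℂ)+2)*w^(2*k+1) - 4*(CcC k)^2*(4*(k:ℂ)+2)*w^(4*k+1) := by
  have h1 : 2*k+1-1 = 2*k := by omega
  have h2 : 2*(2*k+1) = 4*k+2 := by omega
  simp [Dpoly, Ppoly, Hpoly, derivative_pow, derivative_mul, h1, h2]
  ring

lemma natfact (n m : ℕ) : (n+m).factorial ≤ n.factorial * (n+m)^m := by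
  induction m with
  | zero => simp
  | succ m ih =>
    calc (n+(m+1)).factorial = (n+m+1) * (n+m).factorial := rfl
    _ ≤ (n+m+1) * (n.factorial * (n+m)^m) := Nat.mul_le_mul_left _ ih
    _ ≤ (n+m+1) * (n.factorial * (n+m+1)^m) := Nat.mul_le_mul_left _
        (Nat.mul_le_mul_left _ (Nat.pow_le_pow_left (Nat.le_succ _) m))
    _ = n.factorial * ((n+m+1)^m * (n+m+1)) := by ring
    _ = n.factorial * (n+(m+1))^(m+1) := by rw [← pow_succ, show n+m+1 = n+(m+1) from by omega]

lemma CRle (k : ℕ) (hk : 1 ≤ k) : CR k ≤ ((2*k+2 : ℕ) : ℝ)^k := by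
  have h := natfact (k-1) (k-1)
  have he : (k-1)+(k-1) = 2*k-2 := by omega
  rw [he] at h
  have h2 : ((2*k-2 : ℕ))^(k-1) ≤ (2*k+2 : ℕ)^k :=
    le_trans (Nat.pow_le_pow_left (by omega) (k-1)) (Nat.pow_le_pow_right (by omega) (by omega))
  have h3 : (2*k-2).factorial ≤ (k-1).factorial * (2*k+2)^k :=
    le_trans h (Nat.mul_le_mul_left _ h2)
  have hpos : (0:ℝ) < ((k-1).factorial : ℝ) := by exact_mod_cast (k-1).factorial_pos
  rw [CR, div_le_iff₀ hpos]
  calc ((2*k-2).factorial : ℝ) ≤ ((k-1).factorial * (2*k+2)^k : ℕ) := by exact_mod_cast h3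
  _ = ((2*k+2:ℕ):ℝ)^k * ((k-1).factorial : ℝ) := by push_cast; ring

lemma pow4 (k : ℕ) (hk : 10 ≤ k) : 1024 * k ≤ 4^k := by
  have h1 : k < 2^k := Nat.lt_two_pow_self
  have h2 : 1024 ≤ 2^k := by
    calc (1024:ℕ) = 2^10 := by norm_num
    _ ≤ 2^k := Nat.pow_le_pow_right (by norm_num) hk
  calc 1024*k ≤ 2^k * 2^k := Nat.mul_le_mul h2 h1.le
  _ = 4^k := by rw [← Nat.mul_pow]

lemma sum_bound {r : ℝ} (hr : 0 ≤ r) (m : ℕ) (z x : ℂ)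
    (hz : ‖z‖ ≤ r) (hx : ‖x‖ ≤ r) :
    ‖∑ i ∈ Finset.range m, z ^ i * x ^ (m - 1 - i)‖ ≤ m * r ^ (m - 1) := by
  calc ‖∑ i ∈ Finset.range m, z ^ i * x ^ (m - 1 - i)‖
      ≤ ∑ i ∈ Finset.range m, ‖z ^ i * x ^ (m - 1 - i)‖ :=
        norm_sum_le _ _
  _ ≤ ∑ _i ∈ Finset.range m, r ^ (m-1) := by
      refine Finset.sum_le_sum fun i hi => ?_
      have him : i + (m - 1 - i) = m - 1 := by
        have := Finset.mem_range.mp hi; omega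
      calc ‖z ^ i * x ^ (m - 1 - i)‖
          = ‖z‖ ^ i * ‖x‖ ^ (m - 1 - i) := by
            simp [norm_mul, norm_pow]
      _ ≤ r ^ i * r ^ (m - 1 - i) := by
            exact mul_le_mul (pow_le_pow_left₀ (norm_nonneg z) hz i)
              (pow_le_pow_left₀ (norm_nonneg x) hx _)
              (by positivity) (by positivity)
      _ = r ^ (m-1) := by rw [← pow_add, him]
  _ = m * r ^ (m-1) := by
      rw [Finset.sum_const, Finset.card_range, nsmul_eq_mul]

private lemma mul4 (c x y : ℝ) (hc : 0 ≤ c) (h : x ≤ y) : 4*c*x ≤ 4*c*y := by nlinarith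

private lemma arith_habs2 (s A r wb : ℝ) (h6 : s+1 ≤ (wb + r)*A) (hAr : A*r = s - r)
    (hr : 0 < r) : 1 ≤ A*wb := by nlinarith

private lemma arith_loc (A η r wa wb : ℝ) (h1 : A*(wa*wb) ≤ 4*η*(1+r+η)) (h2 : 1 ≤ A*wb)
    (hwa : 0 ≤ wa) (hη : 0 ≤ η) (hr : r ≤ 1/2) (hη1 : η ≤ 1/2) :
    wa ≤ 12*η := by nlinarith [mul_le_mul_of_nonneg_left h2 hwa]

private lemma arith_habs3 (A α β γ η : ℝ) (hA0 : 0 ≤ A) (h4 : γ ≤ α + β) (hza : α ≤ 12*η)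
    (hxa : β ≤ 12*η) : A*γ ≤ A*(12*η) + A*(12*η) := by nlinarith

private lemma arith_chain3 (a P X m : ℝ) (h2 : a ≤ P + X) (h3 : X ≤ m + m) :
    a ≤ P + m + m := by linarith

private lemma arith_esq (e : ℝ) (he0 : 0 < e) (he1 : e ≤ 1) : e*e ≤ e := by nlinarith

private lemma arith_mA (s η e A : ℝ) (hA : A = s^2-1) (hηs : η*s ≤ e) (hη0 : 0 ≤ η)
    (hs0 : 0 < s) : A*(12*η) ≤ 12*(s*e) := by
  nlinarith [mul_le_mul_of_nonneg_left hηs hs0.le]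

private lemma arith_mS (s e : ℝ) (he48 : 24*e ≤ 1/2) (hs0 : 0 < s) : 24*(s*e) ≤ (1/2)*s := by
  nlinarith [mul_le_mul_of_nonneg_left he48 hs0.le]

private lemma arith_gne (kR s e P a1 a2 a3 aA : ℝ)
    (hup : 2*s ≤ P + aA + aA) (hdown : P ≤ a1 + a2 + a3)
    (m1 : a1 ≤ 4*(2*kR+1)*e) (m2 : a2 ≤ 4*(2*kR+2)*e) (m3 : a3 ≤ 4*(4*kR+2)*e)
    (mA : aA ≤ 12*(s*e)) (mS : 24*(s*e) ≤ (1/2)*s)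
    (hnum1 : (32*kR+20)*e ≤ 1) (hsge : 2 ≤ s) : False := by nlinarith

private lemma arith_fr (r η e : ℝ) (hr0 : 0 < r) (hr1 : r ≤ 1/2) (hη0 : 0 ≤ η)
    (hηer : η ≤ e*r) (he48 : 24*e ≤ 1/2) (he0 : 0 < e) :
    (1 - (1 - r^2)) - 2*r + 4*η - 4*(η*r) - 4*η^2 < 0 := by
  nlinarith [mul_le_mul_of_nonneg_right (show 4*e ≤ 1/12 by linarith) hr0.le,
    mul_le_mul_of_nonneg_right hr1 hr0.le, mul_nonneg hη0 hr0.le, sq_nonneg η]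

lemma main (k : ℕ) (hk : 10 ≤ k) :
    ∃ x : ℝ, x ∈ Set.Ioo (0 : ℝ) (1 / Real.sqrt (8 + 8 * k)) ∧
        (Dpoly k).IsRoot (x : ℂ) ∧
        (Dpoly k).rootMultiplicity (x : ℂ) = 1 ∧
        ∀ z : ℂ, ‖z‖ < 1 / Real.sqrt (8 + 8 * k) →
          (Dpoly k).IsRoot z → z = (x : ℂ) := by
  have hk1 : (10:ℝ) ≤ (k:ℝ) := by exact_mod_cast hk
  set s : ℝ := Real.sqrt (8 + 8 * k) with hs_def
  have hs2 : s^2 = 8 + 8*(k:ℝ) := Real.sq_sqrt (by positivity)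
  have hs0 : 0 < s := Real.sqrt_pos.mpr (by positivity)
  have hsge : 2 ≤ s := by nlinarith
  set r : ℝ := 1 / s with hr_def
  have hr0 : 0 < r := by positivity
  have hrs : r * s = 1 := by rw [hr_def]; field_simp
  have hrr : r^2 = 1/(8+8*(k:ℝ)) := by rw [hr_def, div_pow, one_pow, hs2]
  have hr1 : r ≤ 1/2 := by nlinarith
  set A : ℝ := 7 + 8*(k:ℝ) with hA_def
  have hA : A = s^2 - 1 := by rw [hA_def, hs2]; ring
  have hA0 : 0 < A := by rw [hA_def]; nlinarith
  set Cq : ℝ := CR k with hC_def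
  have hC0 : 0 ≤ Cq := by rw [hC_def, CR]; positivity
  have hCc : CcC k = ((Cq:ℝ):ℂ) := by rw [hC_def]; exact CcC_eq k
  have hAc : ((A:ℝ):ℂ) = 7 + 8*(k:ℂ) := by rw [hA_def]; push_cast; ring
  set e : ℝ := (1/4:ℝ)^k with he_def
  have he0 : 0 < e := by rw [he_def]; positivity
  have hp4 : (1024*(k:ℝ)) ≤ 4^k := by exact_mod_cast pow4 k hk
  have he4 : e * 4^k = 1 := by rw [he_def, ← mul_pow]; norm_num
  have hek : e * (1024*(k:ℝ)) ≤ 1 := by nlinarith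
  have hnum1 : (32*(k:ℝ)+20)*e ≤ 1 := by nlinarith
  have he48 : 24*e ≤ 1/2 := by nlinarith
  have he1 : e ≤ 1 := by nlinarith
  have hCr2k : Cq * r^(2*k) ≤ e := by
    have h1 : Cq ≤ ((2*k+2 : ℕ) : ℝ)^k := hC_def ▸ CRle k (by omega)
    have h2 : r^(2*k) = (1/(8+8*(k:ℝ)))^k := by rw [pow_mul, hrr]
    rw [h2]
    calc Cq * (1/(8+8*(k:ℝ)))^k ≤ ((2*k+2:ℕ):ℝ)^k * (1/(8+8*(k:ℝ)))^k := by
          apply mul_le_mul_of_nonneg_right h1 (by positivity)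
    _ = (((2*(k:ℝ)+2)) * (1/(8+8*(k:ℝ))))^k := by rw [← mul_pow]; push_cast; ring_nf
    _ = e := by rw [he_def]; congr 1; rw [eq_div_iff (by norm_num)]; field_simp; ring
  set η : ℝ := Cq * r^(2*k+1) with hη_def
  have hη0 : 0 ≤ η := by rw [hη_def]; positivity
  have hηer : η ≤ e * r := by
    rw [hη_def, pow_succ, ← mul_assoc]
    exact mul_le_mul_of_nonneg_right hCr2k hr0.le
  have hηe : η ≤ e := le_trans hηer (by nlinarith)
  have hη1 : η ≤ 1/2 := by nlinarith
  have hηs : η * s ≤ e := by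
    calc η*s ≤ (e*r)*s := mul_le_mul_of_nonneg_right hηer hs0.le
    _ = e := by rw [mul_assoc, hrs, mul_one]
  -- eval formula with real constants
  have hev : ∀ w : ℂ, (Dpoly k).eval w =
      1 - 2*w - ((A:ℝ):ℂ)*w^2 + 4*((Cq:ℝ):ℂ)*w^(2*k+1)
        - 4*((Cq:ℝ):ℂ)*w^(2*k+2) - 4*((Cq:ℝ):ℂ)^2*w^(4*k+2) := by
    intro w; rw [evalD, hCc, hAc]
  -- roots of p_k
  set a : ℝ := (s-1)/A with ha_def
  set b : ℝ := -((s+1)/A) with hb_def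
  have ha0 : 0 < a := by rw [ha_def]; apply div_pos (by nlinarith) hA0
  have hAa : A * a = s - 1 := by rw [ha_def]; field_simp
  have hAab : A * (a + b) = -2 := by rw [ha_def, hb_def]; field_simp; ring
  have hAab2 : A * (a * b) = -1 := by
    rw [ha_def, hb_def]; field_simp; nlinarith [hA]
  have har : a < r := by
    rw [ha_def, hr_def, div_lt_div_iff₀ hA0 hs0]; nlinarith
  have hAaC : ((A:ℝ):ℂ) * ((a:ℝ):ℂ) = (s:ℂ) - 1 := by exact_mod_cast congrArg (fun t : ℝ => (t:ℂ)) hAa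
  have hfact : ∀ w : ℂ, 1 - 2*w - ((A:ℝ):ℂ)*w^2 = -((A:ℝ):ℂ) * (w - (a:ℝ)) * (w - (b:ℝ)) := by
    intro w
    have c2 : ((A:ℝ):ℂ) * (((a:ℝ):ℂ) + ((b:ℝ):ℂ)) = -2 := by
      exact_mod_cast congrArg (fun t : ℝ => (t:ℂ)) hAab
    have c3 : ((A:ℝ):ℂ) * (((a:ℝ):ℂ) * ((b:ℝ):ℂ)) = -1 := by
      exact_mod_cast congrArg (fun t : ℝ => (t:ℂ)) hAab2
    linear_combination (-w) * c2 + c3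
  have hloc : ∀ w : ℂ, ‖w‖ ≤ r → (Dpoly k).eval w = 0 →
      ‖w - ((a:ℝ):ℂ)‖ ≤ 12*η := by
    intro w hw hwr
    rw [hev w] at hwr
    have key : ((A:ℝ):ℂ) * (w - ((a:ℝ):ℂ)) * (w - ((b:ℝ):ℂ)) =
        4*((Cq:ℝ):ℂ)*w^(2*k+1) * (1 - w - ((Cq:ℝ):ℂ)*w^(2*k+1)) := by
      have hf := hfact w
      linear_combination hf - hwr
    have hwn : ‖w^(2*k+1)‖ ≤ r^(2*k+1) := by
      rw [norm_pow]; exact pow_le_pow_left₀ (norm_nonneg w) hw _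
    have habs1 : A * (‖w - ((a:ℝ):ℂ)‖ * ‖w - ((b:ℝ):ℂ)‖)
        ≤ 4*η*(1 + r + η) := by
      have e1 : ‖((A:ℝ):ℂ) * (w - ((a:ℝ):ℂ)) * (w - ((b:ℝ):ℂ))‖
          = A * (‖w - ((a:ℝ):ℂ)‖ * ‖w - ((b:ℝ):ℂ)‖) := by
        rw [norm_mul, norm_mul, Complex.norm_real, Real.norm_eq_abs, abs_of_pos hA0, mul_assoc]
      rw [← e1, key]
      have t0 : ‖4*((Cq:ℝ):ℂ)*w^(2*k+1)‖ ≤ 4*η := by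
        rw [norm_mul, norm_mul, Complex.norm_real, Real.norm_eq_abs, abs_of_nonneg hC0,
          show ‖(4:ℂ)‖ = 4 by norm_num, hη_def]
        exact le_trans (mul4 Cq _ _ hC0 hwn) (le_of_eq (by ring))
      have t1 : ‖1 - w - ((Cq:ℝ):ℂ)*w^(2*k+1)‖ ≤ 1 + r + η := by
        calc ‖1 - w - ((Cq:ℝ):ℂ)*w^(2*k+1)‖
            ≤ ‖1 - w‖ + ‖((Cq:ℝ):ℂ)*w^(2*k+1)‖ :=
              norm_sub_le _ _
        _ ≤ (1 + ‖w‖) + Cq * r^(2*k+1) := by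
            have h2 := norm_sub_le (1:ℂ) w
            simp only [norm_one] at h2
            have h3 : ‖((Cq:ℝ):ℂ)*w^(2*k+1)‖ ≤ Cq * r^(2*k+1) := by
              rw [norm_mul, Complex.norm_real, Real.norm_eq_abs, abs_of_nonneg hC0]
              exact mul_le_mul_of_nonneg_left hwn hC0
            linarith
        _ ≤ 1 + r + η := by rw [hη_def]; linarith
      rw [norm_mul]
      exact mul_le_mul t0 t1 (norm_nonneg _) (by positivity)
    have habs2 : 1 ≤ A * ‖w - ((b:ℝ):ℂ)‖ := by
      have hb1 : ‖((b:ℝ):ℂ)‖ = (s+1)/A := by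
        rw [Complex.norm_real, Real.norm_eq_abs, hb_def, abs_of_neg (neg_lt_zero.mpr (by positivity)), neg_neg]
      have tri : ‖((b:ℝ):ℂ)‖ - ‖w‖ ≤ ‖((b:ℝ):ℂ) - w‖ := by
        have := norm_sub_norm_le ((b:ℝ):ℂ) w
        simpa using this
      have habsb : ‖((b:ℝ):ℂ) - w‖ = ‖w - ((b:ℝ):ℂ)‖ := by
        rw [norm_sub_rev]
      have h5 : (s+1)/A ≤ ‖w - ((b:ℝ):ℂ)‖ + r := by
        rw [← hb1, ← habsb]; linarith
      have h6 : s+1 ≤ (‖w - ((b:ℝ):ℂ)‖ + r)*A := (div_le_iff₀ hA0).mp h5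
      have hAr : A*r = s - r := by rw [hA]; linear_combination s*hrs
      exact arith_habs2 s A r _ h6 hAr hr0
    exact arith_loc A η r _ _ habs1 habs2 (norm_nonneg _) hη0 hr1 hη1
  have hGne : ∀ u v w z x : ℂ, ‖u‖ ≤ (2*(k:ℝ)+1)*r^(2*k) →
      ‖v‖ ≤ (2*(k:ℝ)+2)*r^(2*k+1) →
      ‖w‖ ≤ (4*(k:ℝ)+2)*r^(4*k+1) →
      ‖z - ((a:ℝ):ℂ)‖ ≤ 12*η → ‖x - ((a:ℝ):ℂ)‖ ≤ 12*η →
      -2 - ((A:ℝ):ℂ)*(z+x) + 4*((Cq:ℝ):ℂ)*u - 4*((Cq:ℝ):ℂ)*v - 4*((Cq:ℝ):ℂ)^2*w ≠ 0 := by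
    intro u v w z x' hu hv hw hza hxa h0
    have key : (2 : ℂ) + ((A:ℝ):ℂ)*(z+x') =
        4*((Cq:ℝ):ℂ)*u - 4*((Cq:ℝ):ℂ)*v - 4*((Cq:ℝ):ℂ)^2*w := by
      linear_combination -h0
    have hid : ((2*s : ℝ) : ℂ) = (2 + ((A:ℝ):ℂ)*(z+x'))
        - ((A:ℝ):ℂ)*((z - ((a:ℝ):ℂ)) + (x' - ((a:ℝ):ℂ))) := by
      push_cast
      linear_combination (-2:ℂ)*hAaC
    have hup : 2*s ≤ ‖2 + ((A:ℝ):ℂ)*(z+x')‖ + A*(12*η) + A*(12*η) := by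
      have h1 : ‖((2*s : ℝ) : ℂ)‖ = 2*s := by
        rw [Complex.norm_real, Real.norm_eq_abs, abs_of_pos (by positivity)]
      have h2 : ‖(((2*s:ℝ)):ℂ)‖ ≤ ‖2 + ((A:ℝ):ℂ)*(z+x')‖
          + ‖((A:ℝ):ℂ)*((z - ((a:ℝ):ℂ)) + (x' - ((a:ℝ):ℂ)))‖ := by
        rw [hid]; exact norm_sub_le _ _
      have h3 : ‖((A:ℝ):ℂ)*((z - ((a:ℝ):ℂ)) + (x' - ((a:ℝ):ℂ)))‖
          ≤ A*(12*η) + A*(12*η) := by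
        rw [norm_mul, Complex.norm_real, Real.norm_eq_abs, abs_of_pos hA0]
        exact arith_habs3 A _ _ _ η hA0.le (norm_add_le _ _) hza hxa
      rw [h1] at h2
      exact arith_chain3 _ _ _ _ h2 (by linarith [h3])
    have hdown : ‖2 + ((A:ℝ):ℂ)*(z+x')‖ ≤ 4*Cq*((2*(k:ℝ)+1)*r^(2*k))
        + 4*Cq*((2*(k:ℝ)+2)*r^(2*k+1)) + 4*Cq^2*((4*(k:ℝ)+2)*r^(4*k+1)) := by
      rw [key]
      have t1 : ‖4*((Cq:ℝ):ℂ)*u‖ ≤ 4*Cq*((2*(k:ℝ)+1)*r^(2*k)) := by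
        rw [norm_mul, norm_mul, Complex.norm_real, Real.norm_eq_abs, abs_of_nonneg hC0,
          show ‖(4:ℂ)‖ = 4 by norm_num]
        exact le_trans (mul4 Cq _ _ hC0 hu) (le_of_eq (by ring))
      have t2 : ‖4*((Cq:ℝ):ℂ)*v‖ ≤ 4*Cq*((2*(k:ℝ)+2)*r^(2*k+1)) := by
        rw [norm_mul, norm_mul, Complex.norm_real, Real.norm_eq_abs, abs_of_nonneg hC0,
          show ‖(4:ℂ)‖ = 4 by norm_num]
        exact le_trans (mul4 Cq _ _ hC0 hv) (le_of_eq (by ring))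
      have t3 : ‖4*((Cq:ℝ):ℂ)^2*w‖ ≤ 4*Cq^2*((4*(k:ℝ)+2)*r^(4*k+1)) := by
        rw [norm_mul, norm_mul, norm_pow, Complex.norm_real, Real.norm_eq_abs, abs_of_nonneg hC0,
          show ‖(4:ℂ)‖ = 4 by norm_num]
        exact le_trans (mul4 (Cq^2) _ _ (sq_nonneg Cq) hw) (le_of_eq (by ring))
      calc ‖4*((Cq:ℝ):ℂ)*u - 4*((Cq:ℝ):ℂ)*v - 4*((Cq:ℝ):ℂ)^2*w‖
          ≤ ‖4*((Cq:ℝ):ℂ)*u - 4*((Cq:ℝ):ℂ)*v‖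
            + ‖4*((Cq:ℝ):ℂ)^2*w‖ := norm_sub_le _ _
      _ ≤ ‖4*((Cq:ℝ):ℂ)*u‖ + ‖4*((Cq:ℝ):ℂ)*v‖
            + ‖4*((Cq:ℝ):ℂ)^2*w‖ :=
          add_le_add_left (norm_sub_le _ _) _
      _ ≤ _ := add_le_add (add_le_add t1 t2) t3
    have p1 : Cq * r^(2*k) = η * s := by
      rw [hη_def, pow_succ]
      calc Cq * r^(2*k) = Cq * r^(2*k) * (r*s) := by rw [hrs, mul_one]
      _ = Cq * (r^(2*k)*r) * s := by ring
    have p3 : Cq^2 * r^(4*k+1) = (η*s)*η := by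
      rw [show (4*k+1) = 2*k + (2*k+1) from by omega, pow_add]
      calc Cq^2 * (r^(2*k)*r^(2*k+1)) = (Cq*r^(2*k))*(Cq*r^(2*k+1)) := by ring
      _ = (η*s)*(Cq*r^(2*k+1)) := by rw [p1]
      _ = (η*s)*η := by rw [← hη_def]
    have d1 : 4*Cq*((2*(k:ℝ)+1)*r^(2*k)) = 4*(2*(k:ℝ)+1)*(η*s) := by
      rw [← p1]; ring
    have d2 : 4*Cq*((2*(k:ℝ)+2)*r^(2*k+1)) = 4*(2*(k:ℝ)+2)*η := by
      rw [hη_def]; ring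
    have d3 : 4*Cq^2*((4*(k:ℝ)+2)*r^(4*k+1)) = 4*(4*(k:ℝ)+2)*((η*s)*η) := by
      rw [show 4*Cq^2*((4*(k:ℝ)+2)*r^(4*k+1)) = (4*(k:ℝ)+2)*(Cq^2*r^(4*k+1))*4 from by ring, p3]
      ring
    rw [d1, d2, d3] at hdown
    have q3 : (η*s)*η ≤ e*e := mul_le_mul hηs hηe hη0 he0.le
    have q4 : e*e ≤ e := arith_esq e he0 he1
    have m1 : 4*(2*(k:ℝ)+1)*(η*s) ≤ 4*(2*(k:ℝ)+1)*e :=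
      mul_le_mul_of_nonneg_left hηs (by positivity)
    have m2 : 4*(2*(k:ℝ)+2)*η ≤ 4*(2*(k:ℝ)+2)*e :=
      mul_le_mul_of_nonneg_left hηe (by positivity)
    have m3 : 4*(4*(k:ℝ)+2)*((η*s)*η) ≤ 4*(4*(k:ℝ)+2)*e :=
      mul_le_mul_of_nonneg_left (le_trans q3 q4) (by positivity)
    have mA : A*(12*η) ≤ 12*(s*e) := arith_mA s η e A hA hηs hη0 hs0
    have mS : 24*(s*e) ≤ (1/2)*s := arith_mS s e he48 hs0
    exact arith_gne (k:ℝ) s e _ _ _ _ _ hup hdown m1 m2 m3 mA mS hnum1 hsge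
  set F : ℝ → ℝ := fun t => 1 - 2*t - A*t^2 + 4*Cq*t^(2*k+1) - 4*Cq*t^(2*k+2)
      - 4*Cq^2*t^(4*k+2) with hF_def
  obtain ⟨x, hxIoo, hFx⟩ : ∃ x ∈ Set.Ioo (0:ℝ) r, F x = 0 := by
    have hcont : ContinuousOn F (Set.Icc 0 r) := by
      rw [hF_def]; fun_prop
    have hF0 : F 0 = 1 := by
      rw [hF_def]
      simp [zero_pow, (by omega : 2*k+1 ≠ 0), (by omega : 2*k+2 ≠ 0), (by omega : 4*k+2 ≠ 0)]
    have hFr : F r < 0 := by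
      have hval : F r = (1 - A*r^2) - 2*r + 4*η - 4*(η*r) - 4*η^2 := by
        rw [hF_def, hη_def]; ring
      have e4 : A*r^2 = 1 - r^2 := by rw [hA]; linear_combination (r*s+1)*hrs
      rw [hval, e4]
      exact arith_fr r η e hr0 hr1 hη0 hηer he48 he0
    have h0mem : (0:ℝ) ∈ Set.Ioo (F r) (F 0) := ⟨hFr, by rw [hF0]; norm_num⟩
    obtain ⟨x, hx, hfx⟩ := intermediate_value_Ioo' hr0.le hcont h0mem
    exact ⟨x, hx, hfx⟩
  have hFx' : 1 - 2*x - A*x^2 + 4*Cq*x^(2*k+1) - 4*Cq*x^(2*k+2) - 4*Cq^2*x^(4*k+2) = 0 := by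
    rw [hF_def] at hFx
    simpa using hFx
  have hxr : ‖((x:ℝ):ℂ)‖ ≤ r := by
    rw [Complex.norm_real, Real.norm_eq_abs, abs_of_pos hxIoo.1]; exact hxIoo.2.le
  have hroot : (Dpoly k).IsRoot ((x:ℝ):ℂ) := by
    show (Dpoly k).eval _ = 0
    rw [hev]
    have hc := congrArg (fun t : ℝ => (t:ℂ)) hFx'
    push_cast at hc ⊢
    linear_combination hc
  have hxa : ‖((x:ℝ):ℂ) - ((a:ℝ):ℂ)‖ ≤ 12*η := hloc _ hxr hroot
  have huniq : ∀ z : ℂ, ‖z‖ < r → (Dpoly k).IsRoot z → z = ((x:ℝ):ℂ) := by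
    intro z hzr hz
    have hz0 : (Dpoly k).eval z = 0 := hz
    have hza : ‖z - ((a:ℝ):ℂ)‖ ≤ 12*η := hloc z hzr.le hz0
    have hx0 : (Dpoly k).eval ((x:ℝ):ℂ) = 0 := hroot
    rw [hev] at hz0 hx0
    have mkS : ∀ m : ℕ, ∃ S : ℂ, S * (z - ((x:ℝ):ℂ)) = z^m - ((x:ℝ):ℂ)^m ∧
        ‖S‖ ≤ (m:ℝ) * r^(m-1) :=
      fun m => ⟨_, geom_sum₂_mul _ _ _, sum_bound hr0.le m z ((x:ℝ):ℂ) hzr.le hxr⟩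
    obtain ⟨S1, g1, b1⟩ := mkS (2*k+1)
    obtain ⟨S2, g2, b2⟩ := mkS (2*k+2)
    obtain ⟨S3, g3, b3⟩ := mkS (4*k+2)
    have hS1b : ‖S1‖ ≤ (2*(k:ℝ)+1)*r^(2*k) :=
      le_trans b1 (le_of_eq (by rw [show 2*k+1-1 = 2*k from by omega]; push_cast; ring))
    have hS2b : ‖S2‖ ≤ (2*(k:ℝ)+2)*r^(2*k+1) :=
      le_trans b2 (le_of_eq (by rw [show 2*k+2-1 = 2*k+1 from by omega]; push_cast; ring))
    have hS3b : ‖S3‖ ≤ (4*(k:ℝ)+2)*r^(4*k+1) :=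
      le_trans b3 (le_of_eq (by rw [show 4*k+2-1 = 4*k+1 from by omega]; push_cast; ring))
    have hfac : (z - ((x:ℝ):ℂ)) * (-2 - ((A:ℝ):ℂ)*(z+((x:ℝ):ℂ)) + 4*((Cq:ℝ):ℂ)*S1
        - 4*((Cq:ℝ):ℂ)*S2 - 4*((Cq:ℝ):ℂ)^2*S3) = 0 := by
      linear_combination hz0 - hx0 + 4*((Cq:ℝ):ℂ)*g1 - 4*((Cq:ℝ):ℂ)*g2 - 4*((Cq:ℝ):ℂ)^2*g3
    have hG := hGne S1 S2 S3 z ((x:ℝ):ℂ) hS1b hS2b hS3b hza hxa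
    rcases mul_eq_zero.mp hfac with h | h
    · exact sub_eq_zero.mp h
    · exact absurd h hG
  have hD0 : Dpoly k ≠ 0 := by
    intro h
    have h1 := evalD k 0
    rw [h] at h1
    simp [zero_pow, (by omega : 2*k+1 ≠ 0), (by omega : 2*k+2 ≠ 0), (by omega : 4*k+2 ≠ 0)] at h1
  have hder : ¬ ((Dpoly k).derivative).IsRoot ((x:ℝ):ℂ) := by
    intro habs
    have h0 : ((Dpoly k).derivative).eval ((x:ℝ):ℂ) = 0 := habs
    rw [evalD', hCc] at h0
    have hxp : ∀ m : ℕ, ‖((x:ℝ):ℂ)^m‖ ≤ r^m := fun m => by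
      rw [norm_pow]; exact pow_le_pow_left₀ (norm_nonneg _) hxr m
    have cab : ∀ c : ℝ, 0 < c → ‖((c:ℝ):ℂ)‖ = c := fun c hc => by
      rw [Complex.norm_real, Real.norm_eq_abs, abs_of_pos hc]
    refine hGne (((2*(k:ℝ)+1 : ℝ) : ℂ)*((x:ℝ):ℂ)^(2*k)) (((2*(k:ℝ)+2 : ℝ) : ℂ)*((x:ℝ):ℂ)^(2*k+1))
      (((4*(k:ℝ)+2 : ℝ) : ℂ)*((x:ℝ):ℂ)^(4*k+1)) ((x:ℝ):ℂ) ((x:ℝ):ℂ) ?_ ?_ ?_ hxa hxa ?_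
    · rw [norm_mul, cab _ (by positivity)]
      exact mul_le_mul_of_nonneg_left (hxp _) (by positivity)
    · rw [norm_mul, cab _ (by positivity)]
      exact mul_le_mul_of_nonneg_left (hxp _) (by positivity)
    · rw [norm_mul, cab _ (by positivity)]
      exact mul_le_mul_of_nonneg_left (hxp _) (by positivity)
    · rw [hAc]
      push_cast at h0 ⊢
      linear_combination h0
  have hmult : (Dpoly k).rootMultiplicity ((x:ℝ):ℂ) = 1 := by
    have hge : 0 < (Dpoly k).rootMultiplicity ((x:ℝ):ℂ) := (rootMultiplicity_pos hD0).mpr hroot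
    have hle : (Dpoly k).rootMultiplicity ((x:ℝ):ℂ) ≤ 1 := by
      by_contra hgt
      push_neg at hgt
      have hd := derivative_rootMultiplicity_of_root hroot
      have hpos : 0 < ((Dpoly k).derivative).rootMultiplicity ((x:ℝ):ℂ) := by omega
      exact hder (rootMultiplicity_pos'.mp hpos).2
    omega
  exact ⟨x, hxIoo, hroot, hmult, huniq⟩

/-- For all sufficiently large integers `k`, the unique root of `Δ_k(z)` in
the open complex disk `|z| < 1/√(8+8k)` is a simple real root lying in the open real interval
`(0, 1/√(8+8k))`. -/
theorem statement6 :
    ∀ᶠ k : ℕ in Filter.atTop,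
      ∃ x : ℝ, x ∈ Set.Ioo (0 : ℝ) (1 / Real.sqrt (8 + 8 * k)) ∧
        (Dpoly k).IsRoot (x : ℂ) ∧
        (Dpoly k).rootMultiplicity (x : ℂ) = 1 ∧
        ∀ z : ℂ, ‖z‖ < 1 / Real.sqrt (8 + 8 * k) →
          (Dpoly k).IsRoot z → z = (x : ℂ) := by
  rw [Filter.eventually_atTop]
  exact ⟨10, fun k hk => main k hk⟩
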